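/- Let s, h : 𝔻 → ℂ be analytic functions with |s(ζ)| ≤ 1 and |h(ζ)| ≤ 1 on 𝔻, with Taylor coefficient sequences (s_k) and (h_k) at 0, and let g : ℕ → ℍ be the sequence g_k = s_k + h_k·j. Then I_n − T_n(g)·T_n(g)* is positive semidefinite in the quaternionic sense for every n ≥ 1 if and only if for every n ≥ 1 the 2n×2n complex block matrix [[I_n − T_n(s)·T_n(s)* − T_n(h)·T_n(h)*, T_n(s)·T_n(h)ᵀ − T_n(h)·T_n(s)ᵀ], [conj(T_n(h))·T_n(s)* − conj(T_n(s))·T_n(h)*, I_n − conj(T_n(s))·T_n(s)ᵀ − conj(T_n(h))·T_n(h)ᵀ]] is positive semidefinite over ℂ. -/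

import Mathlib

open Quaternion Filter Matrix ComplexOrder

noncomputable section

/-- The imaginary unit `i` of the real quaternions. -/
def qi : ℍ := ⟨0, 1, 0, 0⟩

/-- The imaginary unit `j` of the real quaternions. -/
def qj : ℍ := ⟨0, 0, 1, 0⟩

/-- The Pick matrix of `f : ℍ → ℍ` at the points `z 0, …, z (n-1)` of the unit ball:
its `(i,j)` entry is `∑ₖ (z i)^k (1 - f(z i) * star f(z j)) (star (z j))^k`. -/
def pickMatrix {n : ℕ} (f : ℍ → ℍ) (z : Fin n → ℍ) : Matrix (Fin n) (Fin n) ℍ :=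
  Matrix.of fun i j => ∑' k : ℕ, z i ^ k * (1 - f (z i) * star (f (z j))) * (star (z j)) ^ k

/-- A quaternionic matrix is positive semidefinite if every quadratic form
`∑ᵢⱼ star (v i) * P i j * v j` is a nonnegative real scalar quaternion. -/
def QPosSemidef {n : ℕ} (P : Matrix (Fin n) (Fin n) ℍ) : Prop :=
  ∀ v : Fin n → ℍ, ∃ r : ℝ, 0 ≤ r ∧ (∑ i, ∑ j, star (v i) * P i j * v j) = (r : ℍ)

/-- `f` is left-regular on the unit ball: it is given there by an (absolutely convergent)
power series with quaternionic coefficients on the right. -/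
def LeftRegular (f : ℍ → ℍ) : Prop :=
  ∃ c : ℕ → ℍ,
    Filter.limsup (fun k : ℕ => ‖c k‖ ^ (1 / (k : ℝ))) Filter.atTop ≤ 1 ∧
    ∀ α : ℍ, ‖α‖ < 1 → f α = ∑' k : ℕ, α ^ k * c k

/-- The `n × n` lower-triangular Toeplitz matrix built from a sequence. -/
def toeplitz {R : Type*} [Zero R] (n : ℕ) (g : ℕ → R) : Matrix (Fin n) (Fin n) R :=
  Matrix.of fun i j => if (j : ℕ) ≤ (i : ℕ) then g ((i : ℕ) - (j : ℕ)) else 0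

local notation "CC" => starRingEnd ℂ

lemma qj_re : qj.re = 0 := rfl
lemma qj_imI : qj.imI = 0 := rfl
lemma qj_imJ : qj.imJ = 1 := rfl
lemma qj_imK : qj.imK = 0 := rfl

lemma scalar1 (s h s' h' : ℂ) :
    ((s : ℍ) + (h : ℍ) * qj) * star ((s' : ℍ) + (h' : ℍ) * qj) =
      ((s * CC s' + h * CC h' : ℂ) : ℍ) + ((h * s' - s * h' : ℂ) : ℍ) * qj := by
  ext <;> simp [qj_re, qj_imI, qj_imJ, qj_imK, Quaternion.re_mul, Quaternion.imI_mul, Quaternion.imJ_mul, Quaternion.imK_mul, Complex.ext_iff, mul_comm] <;> ring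

lemma scalar2 (a b x y x' y' : ℂ) :
    star ((x : ℍ) + (y : ℍ) * qj) * (((a : ℂ) : ℍ) + ((b : ℂ) : ℍ) * qj) *
      ((x' : ℍ) + (y' : ℍ) * qj) =
      ((CC x * a * x' - CC x * b * CC y' + y * CC b * x' + y * CC a * CC y' : ℂ) : ℍ) +
      ((CC x * a * y' + y * CC b * y' + CC x * b * CC x' - y * CC a * CC x' : ℂ) : ℍ) * qj := by
  ext <;> simp [qj_re, qj_imI, qj_imJ, qj_imK, Quaternion.re_mul, Quaternion.imI_mul, Quaternion.imJ_mul, Quaternion.imK_mul, Complex.ext_iff] <;> ring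

lemma sub_decomp (a b c d : ℂ) :
    (((a : ℂ) : ℍ) + ((b : ℂ) : ℍ) * qj) - (((c : ℂ) : ℍ) + ((d : ℂ) : ℍ) * qj) =
      ((a - c : ℂ) : ℍ) + ((b - d : ℂ) : ℍ) * qj := by
  ext <;> simp [qj_re, qj_imI, qj_imJ, qj_imK, Quaternion.re_mul, Quaternion.imI_mul, Quaternion.imJ_mul, Quaternion.imK_mul] <;> ring

lemma sum_decomp {ι : Type*} (s : Finset ι) (f g : ι → ℂ) :
    ∑ i ∈ s, (((f i : ℂ) : ℍ) + ((g i : ℂ) : ℍ) * qj) =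
      ((∑ i ∈ s, f i : ℂ) : ℍ) + ((∑ i ∈ s, g i : ℂ) : ℍ) * qj := by
  rw [Finset.sum_add_distrib, ← Finset.sum_mul]
  congr 1
  · exact (map_sum Quaternion.ofComplex f s).symm
  · congr 1; exact (map_sum Quaternion.ofComplex g s).symm

lemma decomp_unique (α β : ℂ) (r : ℝ) :
    (α : ℍ) + (β : ℍ) * qj = (r : ℍ) ↔ α = r ∧ β = 0 := by
  rw [Quaternion.ext_iff]
  simp only [Complex.ext_iff, qj_re, qj_imI, qj_imJ, qj_imK, Quaternion.re_mul, Quaternion.imI_mul, Quaternion.imJ_mul, Quaternion.imK_mul]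
  simp [qj_re, qj_imI, qj_imJ, qj_imK]
  tauto

lemma qdecomp (q : ℍ) : q = ((⟨q.re, q.imI⟩ : ℂ) : ℍ) + ((⟨q.imJ, q.imK⟩ : ℂ) : ℍ) * qj := by
  ext <;> simp [qj_re, qj_imI, qj_imJ, qj_imK, Quaternion.re_mul, Quaternion.imI_mul, Quaternion.imJ_mul, Quaternion.imK_mul]

lemma toeplitz_entry {n : ℕ} (sc hc : ℕ → ℂ) (g : ℕ → ℍ)
    (hg : ∀ k, g k = (sc k : ℍ) + (hc k : ℍ) * qj) (i j : Fin n) :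
    toeplitz n g i j = ((toeplitz n sc i j : ℂ) : ℍ) + ((toeplitz n hc i j : ℂ) : ℍ) * qj := by
  simp only [toeplitz, Matrix.of_apply]
  split_ifs with hij
  · exact hg _
  · simp

lemma entry_decomp {n : ℕ} (sc hc : ℕ → ℂ) (g : ℕ → ℍ)
    (hg : ∀ k, g k = (sc k : ℍ) + (hc k : ℍ) * qj) (i j : Fin n) :
    ((1 : Matrix (Fin n) (Fin n) ℍ) - toeplitz n g * (toeplitz n g)ᴴ) i j =
      (((1 - toeplitz n sc * (toeplitz n sc)ᴴ - toeplitz n hc * (toeplitz n hc)ᴴ) i j : ℂ) : ℍ)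
      + (((toeplitz n sc * (toeplitz n hc)ᵀ - toeplitz n hc * (toeplitz n sc)ᵀ) i j : ℂ) : ℍ)
        * qj := by
  set S := toeplitz n sc
  set H := toeplitz n hc
  have hmul : (toeplitz n g * (toeplitz n g)ᴴ) i j =
      (((S * Sᴴ + H * Hᴴ) i j : ℂ) : ℍ) + (((H * Sᵀ - S * Hᵀ) i j : ℂ) : ℍ) * qj := by
    rw [Matrix.mul_apply]
    have : ∀ k, toeplitz n g i k * (toeplitz n g)ᴴ k j =
        ((S i k * CC (S j k) + H i k * CC (H j k) : ℂ) : ℍ)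
        + ((H i k * S j k - S i k * H j k : ℂ) : ℍ) * qj := by
      intro k
      rw [Matrix.conjTranspose_apply, toeplitz_entry sc hc g hg, toeplitz_entry sc hc g hg,
        scalar1]
    simp_rw [this, sum_decomp]
    congr 2
    · simp [Matrix.add_apply, Matrix.mul_apply, Matrix.conjTranspose_apply,
        Finset.sum_add_distrib]
    · simp [Matrix.sub_apply, Matrix.mul_apply, Matrix.transpose_apply,
        Finset.sum_sub_distrib]
  have hone : (1 : Matrix (Fin n) (Fin n) ℍ) i j =
      (((1 : Matrix (Fin n) (Fin n) ℂ) i j : ℂ) : ℍ) + ((0 : ℂ) : ℍ) * qj := by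
    by_cases hij : i = j <;> simp [Matrix.one_apply, hij]
  rw [Matrix.sub_apply, hmul, hone, sub_decomp]
  congr 2 <;> simp [Matrix.sub_apply] <;> ring

lemma qform_decomp {n : ℕ} (A B : Matrix (Fin n) (Fin n) ℂ) (x y : Fin n → ℂ) :
    ∑ i, ∑ j, star ((x i : ℍ) + (y i : ℍ) * qj) *
        (((A i j : ℂ) : ℍ) + ((B i j : ℂ) : ℍ) * qj) * ((x j : ℍ) + (y j : ℍ) * qj) =
      ((∑ i, ∑ j, (CC (x i) * A i j * x j - CC (x i) * B i j * CC (y j)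
          + y i * CC (B i j) * x j + y i * CC (A i j) * CC (y j)) : ℂ) : ℍ)
      + ((∑ i, ∑ j, (CC (x i) * A i j * y j + y i * CC (B i j) * y j
          + CC (x i) * B i j * CC (x j) - y i * CC (A i j) * CC (x j)) : ℂ) : ℍ) * qj := by
  simp_rw [scalar2, sum_decomp]

lemma block_qform {n : ℕ} (A B : Matrix (Fin n) (Fin n) ℂ) (x y : Fin n → ℂ) :
    star (Sum.elim x (fun i => -CC (y i))) ⬝ᵥ
      ((Matrix.fromBlocks A B (-(B.map CC)) (A.map CC)) *ᵥ (Sum.elim x (fun i => -CC (y i)))) =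
    ∑ i, ∑ j, (CC (x i) * A i j * x j - CC (x i) * B i j * CC (y j)
      + y i * CC (B i j) * x j + y i * CC (A i j) * CC (y j)) := by
  simp only [dotProduct, mulVec, Fintype.sum_sum_type, fromBlocks_apply₁₁, fromBlocks_apply₁₂,
    fromBlocks_apply₂₁, fromBlocks_apply₂₂, Sum.elim_inl, Sum.elim_inr, Pi.star_apply,
    Matrix.neg_apply, Matrix.map_apply, star_neg, RingHom.id_apply]
  rw [← Finset.sum_add_distrib]
  refine Finset.sum_congr rfl fun i _ => ?_
  simp only [Finset.mul_sum, ← Finset.sum_add_distrib, star_neg, RCLike.star_def,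
    Complex.conj_conj]
  refine Finset.sum_congr rfl fun j _ => ?_
  ring

lemma antisym_sum_zero {n : ℕ} (f : Fin n → Fin n → ℂ) (hf : ∀ i j, f j i = -f i j) :
    ∑ i, ∑ j, f i j = 0 := by
  have h2 : ∑ i, ∑ j, f i j = -∑ i, ∑ j, f i j := by
    calc ∑ i, ∑ j, f i j = ∑ j, ∑ i, f i j := Finset.sum_comm
    _ = ∑ j, ∑ i, -f j i :=
        Finset.sum_congr rfl fun j _ => Finset.sum_congr rfl fun i _ => hf j i
    _ = -∑ i, ∑ j, f i j := by simp
  have h3 : (2 : ℂ) * ∑ i, ∑ j, f i j = 0 := by linear_combination h2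
  exact (mul_eq_zero.mp h3).resolve_left two_ne_zero

lemma beta_zero {n : ℕ} (A B : Matrix (Fin n) (Fin n) ℂ) (hA : Aᴴ = A) (hB : Bᵀ = -B)
    (x y : Fin n → ℂ) :
    ∑ i, ∑ j, (CC (x i) * A i j * y j + y i * CC (B i j) * y j
      + CC (x i) * B i j * CC (x j) - y i * CC (A i j) * CC (x j)) = 0 := by
  have hA' : ∀ i j, CC (A j i) = A i j := fun i j => by
    simpa [Matrix.conjTranspose_apply] using congrFun (congrFun hA i) j
  have hB' : ∀ i j, B j i = -B i j := fun i j => by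
    simpa using congrFun (congrFun hB i) j
  simp only [Finset.sum_add_distrib, Finset.sum_sub_distrib]
  have h2 : ∑ i, ∑ j, y i * CC (B i j) * y j = 0 := by
    apply antisym_sum_zero
    intro i j; rw [hB', map_neg]; ring
  have h3 : ∑ i, ∑ j, CC (x i) * B i j * CC (x j) = 0 := by
    apply antisym_sum_zero
    intro i j; rw [hB']; ring
  have h14 : ∑ i, ∑ j, y i * CC (A i j) * CC (x j) = ∑ i, ∑ j, CC (x i) * A i j * y j := by
    rw [Finset.sum_comm]
    refine Finset.sum_congr rfl fun i _ => Finset.sum_congr rfl fun j _ => ?_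
    rw [← hA' i j]; ring
  rw [h2, h3, h14]; ring

lemma main_n {n : ℕ} (sc hc : ℕ → ℂ) (g : ℕ → ℍ)
    (hg : ∀ k, g k = (sc k : ℍ) + (hc k : ℍ) * qj) :
    QPosSemidef ((1 : Matrix (Fin n) (Fin n) ℍ) - toeplitz n g * (toeplitz n g)ᴴ) ↔
    (Matrix.fromBlocks
        (1 - toeplitz n sc * (toeplitz n sc)ᴴ - toeplitz n hc * (toeplitz n hc)ᴴ)
        (toeplitz n sc * (toeplitz n hc)ᵀ - toeplitz n hc * (toeplitz n sc)ᵀ)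
        ((toeplitz n hc).map (starRingEnd ℂ) * (toeplitz n sc)ᴴ -
          (toeplitz n sc).map (starRingEnd ℂ) * (toeplitz n hc)ᴴ)
        (1 - (toeplitz n sc).map (starRingEnd ℂ) * (toeplitz n sc)ᵀ -
          (toeplitz n hc).map (starRingEnd ℂ) * (toeplitz n hc)ᵀ)).PosSemidef := by
  set S := toeplitz n sc with hS
  set HH := toeplitz n hc with hHH
  set A : Matrix (Fin n) (Fin n) ℂ := 1 - S * Sᴴ - HH * HHᴴ with hAdef
  set B : Matrix (Fin n) (Fin n) ℂ := S * HHᵀ - HH * Sᵀ with hBdef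
  have hA : Aᴴ = A := by
    simp only [hAdef, Matrix.conjTranspose_sub, Matrix.conjTranspose_mul,
      Matrix.conjTranspose_one, Matrix.conjTranspose_conjTranspose]
  have hB : Bᵀ = -B := by
    simp only [hBdef, Matrix.transpose_sub, Matrix.transpose_mul,
      Matrix.transpose_transpose]
    abel
  have h21 : HH.map (starRingEnd ℂ) * Sᴴ - S.map (starRingEnd ℂ) * HHᴴ
      = -(B.map (starRingEnd ℂ)) := by
    ext i j
    simp [hBdef, Matrix.sub_apply, Matrix.mul_apply, Matrix.map_apply, map_sum,
      Finset.sum_sub_distrib, neg_sub]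
  have h22 : 1 - S.map (starRingEnd ℂ) * Sᵀ - HH.map (starRingEnd ℂ) * HHᵀ
      = A.map (starRingEnd ℂ) := by
    ext i j
    by_cases hij : i = j <;>
      simp [hAdef, Matrix.sub_apply, Matrix.mul_apply, Matrix.map_apply, map_sum,
        Matrix.one_apply, hij]
  rw [h21, h22]
  have eB : (-(B.map (starRingEnd ℂ)))ᴴ = B := by
    ext i j
    have hBji := congrFun (congrFun hB j) i
    simp only [Matrix.transpose_apply, Matrix.neg_apply] at hBji
    simp [Matrix.conjTranspose_apply, Matrix.map_apply, hBji]
  have eC : Bᴴ = -(B.map (starRingEnd ℂ)) := by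
    ext i j
    have hBji := congrFun (congrFun hB j) i
    simp only [Matrix.transpose_apply, Matrix.neg_apply] at hBji
    simp [Matrix.conjTranspose_apply, Matrix.map_apply, hBji]
  have eD : (A.map (starRingEnd ℂ))ᴴ = A.map (starRingEnd ℂ) := by
    ext i j
    have hAij := congrFun (congrFun hA i) j
    simp only [Matrix.conjTranspose_apply] at hAij
    simp only [Matrix.conjTranspose_apply, Matrix.map_apply, RCLike.star_def]
    rw [← hAij]
    simp
  have herm : (Matrix.fromBlocks A B (-(B.map (starRingEnd ℂ)))
      (A.map (starRingEnd ℂ)))ᴴ =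
      Matrix.fromBlocks A B (-(B.map (starRingEnd ℂ))) (A.map (starRingEnd ℂ)) := by
    rw [Matrix.fromBlocks_conjTranspose, hA, eB, eC, eD]
  have hPij := entry_decomp (n := n) sc hc g hg
  simp only [← hS, ← hHH, ← hAdef, ← hBdef] at hPij
  have key : ∀ x y : Fin n → ℂ,
      (∑ i, ∑ j, star ((x i : ℍ) + (y i : ℍ) * qj) *
        ((1 : Matrix (Fin n) (Fin n) ℍ) - toeplitz n g * (toeplitz n g)ᴴ) i j *
        ((x j : ℍ) + (y j : ℍ) * qj)) =
      ((∑ i, ∑ j, (CC (x i) * A i j * x j - CC (x i) * B i j * CC (y j)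
          + y i * CC (B i j) * x j + y i * CC (A i j) * CC (y j)) : ℂ) : ℍ)
      + ((∑ i, ∑ j, (CC (x i) * A i j * y j + y i * CC (B i j) * y j
          + CC (x i) * B i j * CC (x j) - y i * CC (A i j) * CC (x j)) : ℂ) : ℍ) * qj := by
    intro x y
    simp only [hPij]
    exact qform_decomp A B x y
  constructor
  · intro hq
    refine PosSemidef.of_dotProduct_mulVec_nonneg herm fun u => ?_
    set x : Fin n → ℂ := fun i => u (Sum.inl i) with hx
    set y : Fin n → ℂ := fun i => -(starRingEnd ℂ) (u (Sum.inr i)) with hy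
    have hu : u = Sum.elim x (fun i => -(starRingEnd ℂ) (y i)) := by
      funext p
      cases p with
      | inl i => rfl
      | inr i => simp [hy]
    obtain ⟨r, hr0, hr⟩ := hq (fun i => (x i : ℍ) + (y i : ℍ) * qj)
    have hr2 : (∑ i, ∑ j, star ((x i : ℍ) + (y i : ℍ) * qj) *
        ((1 : Matrix (Fin n) (Fin n) ℍ) - toeplitz n g * (toeplitz n g)ᴴ) i j *
        ((x j : ℍ) + (y j : ℍ) * qj)) = (r : ℍ) := hr
    rw [key x y] at hr2
    have hαβ := (decomp_unique _ _ r).mp hr2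
    rw [hu, block_qform A B x y, hαβ.1]
    exact Complex.zero_le_real.mpr hr0
  · intro hpsd v
    set x : Fin n → ℂ := fun i => ⟨(v i).re, (v i).imI⟩ with hx
    set y : Fin n → ℂ := fun i => ⟨(v i).imJ, (v i).imK⟩ with hy
    have hv : ∀ i, v i = (x i : ℍ) + (y i : ℍ) * qj := fun i => qdecomp (v i)
    have hpos := hpsd.dotProduct_mulVec_nonneg (Sum.elim x (fun i => -(starRingEnd ℂ) (y i)))
    rw [block_qform A B x y] at hpos
    have him := (Complex.nonneg_iff.mp hpos).2
    refine ⟨(∑ i, ∑ j, (CC (x i) * A i j * x j - CC (x i) * B i j * CC (y j)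
        + y i * CC (B i j) * x j + y i * CC (A i j) * CC (y j))).re,
      (Complex.nonneg_iff.mp hpos).1, ?_⟩
    rw [show (∑ i, ∑ j, star (v i) *
          ((1 : Matrix (Fin n) (Fin n) ℍ) - toeplitz n g * (toeplitz n g)ᴴ) i j * v j) =
        ∑ i, ∑ j, star ((x i : ℍ) + (y i : ℍ) * qj) *
          ((1 : Matrix (Fin n) (Fin n) ℍ) - toeplitz n g * (toeplitz n g)ᴴ) i j *
          ((x j : ℍ) + (y j : ℍ) * qj) from
        Finset.sum_congr rfl fun i _ => Finset.sum_congr rfl fun j _ => by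
          rw [hv i, hv j],
      key x y, beta_zero A B hA hB x y]
    ext <;> simp [qj_re, qj_imI, qj_imJ, qj_imK, Quaternion.re_mul, Quaternion.imI_mul, Quaternion.imJ_mul, Quaternion.imK_mul, ← him]

/-- For `g = s + h·j` built from two complex Schur-class functions with Taylor coefficients
`sc`, `hc`, contractivity of all quaternionic Toeplitz matrices `T_n(g)` is equivalent to
positive semidefiniteness of the associated `2n × 2n` complex block matrices. -/
theorem quaternionic_schur_block_criterion (s h : ℂ → ℂ) (sc hc : ℕ → ℂ)
    (hsc : ∀ ζ : ℂ, ‖ζ‖ < 1 → HasSum (fun k : ℕ => sc k * ζ ^ k) (s ζ))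
    (hhc : ∀ ζ : ℂ, ‖ζ‖ < 1 → HasSum (fun k : ℕ => hc k * ζ ^ k) (h ζ))
    (hs1 : ∀ ζ : ℂ, ‖ζ‖ < 1 → ‖s ζ‖ ≤ 1) (hh1 : ∀ ζ : ℂ, ‖ζ‖ < 1 → ‖h ζ‖ ≤ 1)
    (g : ℕ → ℍ) (hg : ∀ k, g k = (sc k : ℍ) + (hc k : ℍ) * qj) :
    (∀ n : ℕ, 1 ≤ n →
        QPosSemidef ((1 : Matrix (Fin n) (Fin n) ℍ) - toeplitz n g * (toeplitz n g)ᴴ)) ↔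
    (∀ n : ℕ, 1 ≤ n →
      (Matrix.fromBlocks
        (1 - toeplitz n sc * (toeplitz n sc)ᴴ - toeplitz n hc * (toeplitz n hc)ᴴ)
        (toeplitz n sc * (toeplitz n hc)ᵀ - toeplitz n hc * (toeplitz n sc)ᵀ)
        ((toeplitz n hc).map (starRingEnd ℂ) * (toeplitz n sc)ᴴ -
          (toeplitz n sc).map (starRingEnd ℂ) * (toeplitz n hc)ᴴ)
        (1 - (toeplitz n sc).map (starRingEnd ℂ) * (toeplitz n sc)ᵀ -
          (toeplitz n hc).map (starRingEnd ℂ) * (toeplitz n hc)ᵀ)).PosSemidef) := by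
  constructor
  · intro hq n hn
    exact (main_n sc hc g hg).mp (hq n hn)
  · intro hp n hn
    exact (main_n sc hc g hg).mpr (hp n hn)
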